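/- Let K be a finite index set with |K| = n, let σ ≥ 0, let ψ : K → ℝ, and let (ε_k)_{k∈K} be i.i.d. real random variables with distribution N(0, σ²). Then Σ_{k∈K} Σ_{l∈K} E[cos(ψ_k + ε_k − ψ_l − ε_l)] = n·(1 − e^{−σ²}) + e^{−σ²} · Σ_{k∈K} Σ_{l∈K} cos(ψ_k − ψ_l). -/

import Mathlib

open MeasureTheory ProbabilityTheory Real Complex
open scoped NNReal ENNReal

lemma key_integral (r : ℝ) (hr : 0 < r) :
    ∫ x : ℝ, Real.cos x * Real.exp (-r * x ^ 2) =
      Real.sqrt (π / r) * Real.exp (-(1 / (4 * r))) := by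
  have hb : 0 < ((r : ℂ)).re := by simpa using hr
  have h := fourierIntegral_gaussian hb 1
  have hint : Integrable (fun x : ℝ => cexp (I * 1 * x) * cexp (-(r : ℂ) * x ^ 2)) := by
    have := integrable_cexp_quadratic hb I 0
    refine this.congr ?_
    filter_upwards with x
    rw [← Complex.exp_add]
    ring_nf
  have hre : ∀ x : ℝ, (cexp (I * 1 * x) * cexp (-(r : ℂ) * x ^ 2)).re
      = Real.cos x * Real.exp (-r * x ^ 2) := by
    intro x
    rw [← Complex.exp_add, Complex.exp_re]
    simp [← Complex.ofReal_pow]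
    ring
  calc ∫ x : ℝ, Real.cos x * Real.exp (-r * x ^ 2)
      = ∫ x : ℝ, (cexp (I * 1 * x) * cexp (-(r : ℂ) * x ^ 2)).re := by
        simp_rw [hre]
    _ = (∫ x : ℝ, cexp (I * 1 * x) * cexp (-(r : ℂ) * x ^ 2)).re := by
        simpa using integral_re hint
    _ = ((↑π / (r : ℂ)) ^ (1 / 2 : ℂ) * cexp (-1 ^ 2 / (4 * (r : ℂ)))).re := by rw [h]
    _ = Real.sqrt (π / r) * Real.exp (-(1 / (4 * r))) := by
        have h3 : (↑π / (r : ℂ)) = ((π / r : ℝ) : ℂ) := by push_cast; ring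
        have h4 : ((π / r : ℝ) : ℂ) ^ (1 / 2 : ℂ) = ((Real.sqrt (π / r) : ℝ) : ℂ) := by
          rw [show (1/2 : ℂ) = ((1/2 : ℝ) : ℂ) by norm_num,
            ← Complex.ofReal_cpow (by positivity), Real.sqrt_eq_rpow]
        have h5 : cexp (-1 ^ 2 / (4 * (r : ℂ))) = ((Real.exp (-(1 / (4 * r))) : ℝ) : ℂ) := by
          rw [Complex.ofReal_exp]
          congr 1
          push_cast
          field_simp
        rw [h3, h4, h5, ← Complex.ofReal_mul, Complex.ofReal_re]

lemma integral_cos_gaussianReal (v : ℝ≥0) :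
    ∫ x, Real.cos x ∂(gaussianReal 0 v) = Real.exp (-(v : ℝ) / 2) := by
  by_cases hv : v = 0
  · simp [hv]
  · have hvpos : 0 < (v : ℝ) := by positivity
    rw [gaussianReal_of_var_ne_zero 0 hv]
    have hf : Measurable fun x => (gaussianPDFReal 0 v x).toNNReal :=
      (measurable_gaussianPDFReal 0 v).real_toNNReal
    have hPDF : gaussianPDF 0 v = fun x => ((gaussianPDFReal 0 v x).toNNReal : ℝ≥0∞) := rfl
    rw [hPDF, integral_withDensity_eq_integral_smul hf]
    have hsm : ∀ x : ℝ, (gaussianPDFReal 0 v x).toNNReal • Real.cos x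
        = (Real.sqrt (2 * π * v))⁻¹ * (Real.cos x * Real.exp (-(1/(2*(v:ℝ))) * x ^ 2)) := by
      intro x
      rw [NNReal.smul_def, Real.coe_toNNReal _ (gaussianPDFReal_nonneg 0 v x)]
      rw [gaussianPDFReal]
      have h0 : -(x - 0) ^ 2 / (2 * (v:ℝ)) = -(1/(2*(v:ℝ))) * x ^ 2 := by
        field_simp
        ring
      rw [h0, smul_eq_mul]
      ring
    simp_rw [hsm]
    rw [integral_const_mul, key_integral _ (by positivity)]
    have h1 : π / (1/(2*(v:ℝ))) = 2 * π * v := by field_simp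
    have h2 : -(1 / (4 * (1/(2*(v:ℝ))))) = -(v:ℝ)/2 := by field_simp; ring
    rw [h1, h2, ← mul_assoc, inv_mul_cancel₀ (by positivity), one_mul]

lemma integral_sin_gaussianReal (v : ℝ≥0) :
    ∫ x, Real.sin x ∂(gaussianReal 0 v) = 0 := by
  have hmap : (gaussianReal 0 v).map (fun x => -1 * x) = gaussianReal 0 v := by
    have h := gaussianReal_map_const_mul (μ := 0) (v := v) (-1)
    have h2 : (⟨(-1 : ℝ)^2, sq_nonneg _⟩ : ℝ≥0) = 1 := by ext; norm_num
    convert h using 2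
    · simp
    · ext; simp
  have key : ∫ x, Real.sin x ∂(gaussianReal 0 v)
      = ∫ x, Real.sin (-1 * x) ∂(gaussianReal 0 v) := by
    conv_lhs => rw [← hmap]
    exact integral_map (by fun_prop) Real.measurable_sin.aestronglyMeasurable
  simp only [neg_one_mul, Real.sin_neg] at key
  rw [integral_neg] at key
  linarith

lemma integrable_of_bdd_one {α : Type*} [MeasurableSpace α] {ν : Measure α}
    [IsProbabilityMeasure ν] {f : α → ℝ} (hm : Measurable f) (hb : ∀ x, |f x| ≤ 1) :
    Integrable f ν :=
  (integrable_const 1).mono' hm.aestronglyMeasurable (ae_of_all _ fun x => by simpa using hb x)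

lemma integral_cos_add_gaussianReal (v : ℝ≥0) (θ : ℝ) :
    ∫ x, Real.cos (θ + x) ∂(gaussianReal 0 v) = Real.exp (-(v : ℝ) / 2) * Real.cos θ := by
  simp_rw [Real.cos_add]
  rw [integral_sub
    ((integrable_of_bdd_one Real.measurable_cos (fun x => Real.abs_cos_le_one x)).const_mul _)
    ((integrable_of_bdd_one Real.measurable_sin (fun x => Real.abs_sin_le_one x)).const_mul _),
    integral_const_mul, integral_const_mul, integral_cos_gaussianReal, integral_sin_gaussianReal]
  ring

/-- for i.i.d. Gaussian phase errors `ε_k ~ N(0, σ²)` and phases `ψ_k`,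
`Σ_k Σ_l E[cos (ψ_k + ε_k − ψ_l − ε_l)]
  = n (1 − e^{−σ²}) + e^{−σ²} Σ_k Σ_l cos (ψ_k − ψ_l)`, where `n = |K|`. -/
theorem double_sum_integral_cos_gaussian {Ω : Type*} [MeasurableSpace Ω]
    (μ : Measure Ω) [IsProbabilityMeasure μ]
    {K : Type*} [Fintype K] (σ : ℝ) (hσ : 0 ≤ σ) (ψ : K → ℝ) (ε : K → Ω → ℝ)
    (hεm : ∀ k, Measurable (ε k))
    (hεind : iIndepFun ε μ)
    (hεdist : ∀ k, μ.map (ε k) = gaussianReal 0 (σ ^ 2).toNNReal) :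
    ∑ k, ∑ l, ∫ x, Real.cos (ψ k + ε k x - ψ l - ε l x) ∂μ =
      (Fintype.card K : ℝ) * (1 - Real.exp (-σ ^ 2)) +
        Real.exp (-σ ^ 2) * ∑ k, ∑ l, Real.cos (ψ k - ψ l) := by
    classical
  set v : ℝ≥0 := (σ ^ 2).toNNReal with hv
  have hvc : (v : ℝ) = σ ^ 2 := Real.coe_toNNReal _ (sq_nonneg σ)
  have hterm : ∀ k l, (∫ x, Real.cos (ψ k + ε k x - ψ l - ε l x) ∂μ)
      = (if k = l then 1 else Real.exp (-σ ^ 2) * Real.cos (ψ k - ψ l)) := by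
    intro k l
    by_cases hkl : k = l
    · subst hkl
      simp only [if_pos rfl]
      have h0 : ∀ x, ψ k + ε k x - ψ k - ε k x = 0 := fun x => by ring
      simp [h0]
    · rw [if_neg hkl]
      set θ := ψ k - ψ l with hθ
      have hx : ∀ x, ψ k + ε k x - ψ l - ε l x = (θ + ε k x) - ε l x := fun x => by
        rw [hθ]; ring
      simp_rw [hx, Real.cos_sub]
      have hind : IndepFun (ε k) (ε l) μ := hεind.indepFun hkl
      have hmcos : Measurable fun y : ℝ => Real.cos (θ + y) :=
        Real.measurable_cos.comp (measurable_const.add measurable_id)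
      have hmsin : Measurable fun y : ℝ => Real.sin (θ + y) :=
        Real.measurable_sin.comp (measurable_const.add measurable_id)
      have hi1 : Integrable (fun x => Real.cos (θ + ε k x)) μ :=
        integrable_of_bdd_one (hmcos.comp (hεm k)) (fun x => Real.abs_cos_le_one _)
      have hi2 : Integrable (fun x => Real.cos (ε l x)) μ :=
        integrable_of_bdd_one (Real.measurable_cos.comp (hεm l))
          (fun x => Real.abs_cos_le_one _)
      have hi3 : Integrable (fun x => Real.sin (θ + ε k x)) μ :=
        integrable_of_bdd_one (hmsin.comp (hεm k)) (fun x => Real.abs_sin_le_one _)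
      have hi4 : Integrable (fun x => Real.sin (ε l x)) μ :=
        integrable_of_bdd_one (Real.measurable_sin.comp (hεm l))
          (fun x => Real.abs_sin_le_one _)
      have hip1 : Integrable (fun x => Real.cos (θ + ε k x) * Real.cos (ε l x)) μ :=
        integrable_of_bdd_one ((hmcos.comp (hεm k)).mul (Real.measurable_cos.comp (hεm l)))
          (fun x => by
            rw [abs_mul]
            exact mul_le_one₀ (Real.abs_cos_le_one _) (abs_nonneg _) (Real.abs_cos_le_one _))
      have hip2 : Integrable (fun x => Real.sin (θ + ε k x) * Real.sin (ε l x)) μ :=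
        integrable_of_bdd_one ((hmsin.comp (hεm k)).mul (Real.measurable_sin.comp (hεm l)))
          (fun x => by
            rw [abs_mul]
            exact mul_le_one₀ (Real.abs_sin_le_one _) (abs_nonneg _) (Real.abs_sin_le_one _))
      rw [integral_add hip1 hip2]
      have hind1 : IndepFun (fun x => Real.cos (θ + ε k x)) (fun x => Real.cos (ε l x)) μ :=
        hind.comp hmcos Real.measurable_cos
      have hind2 : IndepFun (fun x => Real.sin (θ + ε k x)) (fun x => Real.sin (ε l x)) μ :=
        hind.comp hmsin Real.measurable_sin
      have e1 : ∫ a, Real.cos (θ + ε k a) * Real.cos (ε l a) ∂μ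
          = (∫ a, Real.cos (θ + ε k a) ∂μ) * ∫ a, Real.cos (ε l a) ∂μ :=
        hind1.integral_fun_mul_eq_mul_integral hi1.aestronglyMeasurable hi2.aestronglyMeasurable
      have e2 : ∫ a, Real.sin (θ + ε k a) * Real.sin (ε l a) ∂μ
          = (∫ a, Real.sin (θ + ε k a) ∂μ) * ∫ a, Real.sin (ε l a) ∂μ :=
        hind2.integral_fun_mul_eq_mul_integral hi3.aestronglyMeasurable hi4.aestronglyMeasurable
      have hmapk : ∫ x, Real.cos (θ + ε k x) ∂μ = Real.exp (-(v : ℝ) / 2) * Real.cos θ := by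
        have h := integral_map (μ := μ) (f := fun y => Real.cos (θ + y)) (hεm k).aemeasurable
          hmcos.aestronglyMeasurable
        rw [hεdist k, integral_cos_add_gaussianReal] at h
        exact h.symm
      have hmapl : ∫ x, Real.cos (ε l x) ∂μ = Real.exp (-(v : ℝ) / 2) := by
        have h := integral_map (μ := μ) (f := fun y => Real.cos y) (hεm l).aemeasurable
          Real.measurable_cos.aestronglyMeasurable
        rw [hεdist l, integral_cos_gaussianReal] at h
        exact h.symm
      have hmapsl : ∫ x, Real.sin (ε l x) ∂μ = 0 := by
        have h := integral_map (μ := μ) (f := fun y => Real.sin y) (hεm l).aemeasurable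
          Real.measurable_sin.aestronglyMeasurable
        rw [hεdist l, integral_sin_gaussianReal] at h
        exact h.symm
      rw [e1, e2, hmapk, hmapl, hmapsl, mul_zero, add_zero, hvc, mul_right_comm,
        ← Real.exp_add, show -σ ^ 2 / 2 + -σ ^ 2 / 2 = -σ ^ 2 by ring]
  simp_rw [hterm]
  have hsplit : ∀ k l : K, (if k = l then (1:ℝ) else Real.exp (-σ ^ 2) * Real.cos (ψ k - ψ l))
      = Real.exp (-σ ^ 2) * Real.cos (ψ k - ψ l)
        + (if k = l then (1 - Real.exp (-σ ^ 2)) else 0) := by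
    intro k l
    by_cases hkl : k = l
    · subst hkl; simp
    · simp [hkl]
  simp_rw [hsplit, Finset.sum_add_distrib, Finset.sum_ite_eq, Finset.mem_univ, if_pos,
    Finset.sum_const, Finset.card_univ, nsmul_eq_mul, ← Finset.mul_sum]
  ring
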